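/- The 2D HLL intermediate state U* = [S_R S_U U_RU + S_L S_D U_LD - S_R S_D U_RD - S_L S_U U_LU - S_U(F_RU - F_LU) + S_D(F_RD - F_LD) - S_R(G_RU - G_RD) + S_L(G_LU - G_LD)] / ((S_R - S_L)(S_U - S_D)) can be written as the convex combination U* = (1/𝔅)[S_L S_D H_LD - S_R S_D H_RD - S_L S_U H_LU + S_R S_U H_RU], where 𝔅 = (S_R-S_L)(S_U-S_D), H_XY = U_XY - F(U_XY)/S_X' - G(U_XY)/S_Y' with appropriate signs (X' ∈ {L,R}, Y' ∈ {D,U}), and all four coefficients S_L S_D/𝔅, -S_R S_D/𝔅, -S_L S_U/𝔅, S_R S_U/𝔅 are positive and sum to 1, provided S_L < 0 < S_R and S_D < 0 < S_U. -/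

import Mathlib

/-- The 2D HLL intermediate state `U*` is a convex combination of the four
`H`-states `H_XY = U_XY - F_XY/S_X - G_XY/S_Y`: with `𝔅 = (S_R-S_L)(S_U-S_D)`,
`U* = (1/𝔅)(S_L S_D H_LD - S_R S_D H_RD - S_L S_U H_LU + S_R S_U H_RU)`, and
the four coefficients are positive and sum to `1`, provided
`S_L < 0 < S_R`, `S_D < 0 < S_U`. -/
theorem intermediate_state_convex_comb {V : Type*} [AddCommGroup V] [Module ℝ V]
    (ULD URD ULU URU FLD FRD FLU FRU GLD GRD GLU GRU : V)
    (SL SR SD SU : ℝ) (hL0 : SL < 0) (hR0 : 0 < SR) (hD0 : SD < 0) (hU0 : 0 < SU)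
    (B : ℝ) (hB : B = (SR - SL) * (SU - SD))
    (HLD HRD HLU HRU Ustar : V)
    (hHLD : HLD = ULD - SL⁻¹ • FLD - SD⁻¹ • GLD)
    (hHRD : HRD = URD - SR⁻¹ • FRD - SD⁻¹ • GRD)
    (hHLU : HLU = ULU - SL⁻¹ • FLU - SU⁻¹ • GLU)
    (hHRU : HRU = URU - SR⁻¹ • FRU - SU⁻¹ • GRU)
    (hUstar : Ustar = ((SR - SL) * (SU - SD))⁻¹ •
      ((SR * SU) • URU + (SL * SD) • ULD - (SR * SD) • URD - (SL * SU) • ULU -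
        SU • (FRU - FLU) + SD • (FRD - FLD) -
        SR • (GRU - GRD) + SL • (GLU - GLD))) :
    Ustar = B⁻¹ • ((SL * SD) • HLD - (SR * SD) • HRD -
        (SL * SU) • HLU + (SR * SU) • HRU) ∧
      0 < SL * SD / B ∧ 0 < -(SR * SD) / B ∧ 0 < -(SL * SU) / B ∧
      0 < SR * SU / B ∧
      SL * SD / B + -(SR * SD) / B + -(SL * SU) / B + SR * SU / B = 1 := by
  have hSL := hL0.ne
  have hSR := hR0.ne'
  have hSD := hD0.ne
  have hSU := hU0.ne
  have hBpos : 0 < B := by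
    rw [hB]; exact mul_pos (by linarith) (by linarith)
  have hBne : B ≠ 0 := hBpos.ne'
  refine ⟨?_, ?_, ?_, ?_, ?_, ?_⟩
  · subst hHLD hHRD hHLU hHRU hUstar hB
    match_scalars <;> field_simp <;> ring
  · exact div_pos (mul_pos_of_neg_of_neg hL0 hD0) hBpos
  · exact div_pos (by nlinarith) hBpos
  · exact div_pos (by nlinarith) hBpos
  · exact div_pos (mul_pos hR0 hU0) hBpos
  · rw [← add_div, ← add_div, ← add_div, div_eq_one_iff_eq hBne, hB]
    ring
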